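/- In the quantum coordinate ring 𝒜_{r,s}(2n), assume [n]_{s⁻⁴}! ≠ 0 in F. Let B′ = A 𝕁_r A^T, i.e. for i < j, b′_{ij} = Σ_{m=1}^n (a_{i,2m−1}·a_{j,2m} − r·a_{i,2m}·a_{j,2m−1}). Then Pf_{s⁻¹}(B′) = cdet_{s⁻¹}(A). -/

import Mathlib

open scoped TensorProduct Classical

noncomputable section Prelude

variable {F : Type*} [Field F] {R : Type*} [Ring R] [Algebra F R]

/-- The number of inversions `l(σ)` of a permutation `σ ∈ S_n`. -/
def inversions {n : ℕ} (σ : Equiv.Perm (Fin n)) : ℕ :=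
  (Finset.univ.filter fun p : Fin n × Fin n => p.1 < p.2 ∧ σ p.2 < σ p.1).card

/-- The quantum row determinant `rdet_r(A) = Σ_σ (-r)^{l(σ)} a_{1σ(1)} ⋯ a_{nσ(n)}`. -/
def rdet (r : F) {n : ℕ} (a : Fin n → Fin n → R) : R :=
  ∑ σ : Equiv.Perm (Fin n), (-r) ^ inversions σ • (List.ofFn fun i => a i (σ i)).prod

/-- The quantum column determinant `cdet_{s⁻¹}(A) = Σ_σ (-s)^{-l(σ)} a_{σ(1)1} ⋯ a_{σ(n)n}`. -/
def cdet (s : F) {n : ℕ} (a : Fin n → Fin n → R) : R :=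
  ∑ σ : Equiv.Perm (Fin n),
    ((-s) ^ (-(inversions σ : ℤ))) • (List.ofFn fun i => a (σ i) i).prod

/-- The quantum (column) permanent `per_q(A) = Σ_σ q^{l(σ)} a_{σ(1)1} ⋯ a_{σ(n)n}`. -/
def qper (q : F) {n : ℕ} (a : Fin n → Fin n → R) : R :=
  ∑ σ : Equiv.Perm (Fin n), q ^ inversions σ • (List.ofFn fun i => a (σ i) i).prod

/-- The defining relations of the two-parameter quantum semigroup `𝒜_{r,s}(n)`:
`a` plays the role of the matrix of generators `(a_{ij})`. -/
def IsQSemigroup (r s : F) {n : ℕ} (a : Fin n → Fin n → R) : Prop :=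
  (∀ i k l : Fin n, k < l → a i k * a i l = r • (a i l * a i k)) ∧
  (∀ i j k : Fin n, i < j → a i k * a j k = s⁻¹ • (a j k * a i k)) ∧
  (∀ i j k l : Fin n, i < j → k < l → r • (a i l * a j k) = s⁻¹ • (a j k * a i l)) ∧
  (∀ i j k l : Fin n, i < j → k < l →
    a i k * a j l - a j l * a i k = (r - s) • (a i l * a j k))

/-- The quantum integer `[m]_v = 1 + v + ⋯ + v^{m-1}`. -/
def qint (v : F) (m : ℕ) : F := ∑ k ∈ Finset.range m, v ^ k

/-- The quantum factorial `[n]_v! = [n]_v [n-1]_v ⋯ [1]_v`. -/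
def qfac (v : F) (n : ℕ) : F := ∏ m ∈ Finset.range n, qint v (m + 1)

/-- The position `2i-1` (1-based), i.e. `2i` (0-based), in `Fin (2n)`. -/
def pL {n : ℕ} (i : Fin n) : Fin (2 * n) := ⟨2 * i.1, by have := i.2; omega⟩

/-- The position `2i` (1-based), i.e. `2i+1` (0-based), in `Fin (2n)`. -/
def pR {n : ℕ} (i : Fin n) : Fin (2 * n) := ⟨2 * i.1 + 1, by have := i.2; omega⟩

/-- The product `b_{σ(1)σ(2)} b_{σ(3)σ(4)} ⋯ b_{σ(2n-1)σ(2n)}`. -/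
def pairProd {n : ℕ} (b : Fin (2 * n) → Fin (2 * n) → R) (σ : Equiv.Perm (Fin (2 * n))) : R :=
  (List.ofFn fun i : Fin n => b (σ (pL i)) (σ (pR i))).prod

/-- Membership in `Π′`: `σ(2i-1) < σ(2i)` for all `i = 1, …, n`. -/
def inPi' {n : ℕ} (σ : Equiv.Perm (Fin (2 * n))) : Prop := ∀ i : Fin n, σ (pL i) < σ (pR i)

/-- Membership in `Π`: additionally `σ(1) < σ(3) < ⋯ < σ(2n-1)`. -/
def inPi {n : ℕ} (σ : Equiv.Perm (Fin (2 * n))) : Prop :=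
  inPi' σ ∧ ∀ i j : Fin n, i < j → σ (pL i) < σ (pL j)

/-- `Σ_{σ∈Π′} (-r)^{l(σ)} b_{σ(1)σ(2)} ⋯ b_{σ(2n-1)σ(2n)}`. -/
def pfSum (r : F) {n : ℕ} (b : Fin (2 * n) → Fin (2 * n) → R) : R :=
  ∑ σ : Equiv.Perm (Fin (2 * n)), if inPi' σ then (-r) ^ inversions σ • pairProd b σ else 0

/-- The quantum Pfaffian `Pf_r(B)`. -/
def Pf (r : F) {n : ℕ} (b : Fin (2 * n) → Fin (2 * n) → R) : R :=
  (qfac (r ^ 4) n)⁻¹ • pfSum r b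

/-- `Σ_{σ∈Π′} (-s)^{-l(σ)} b_{σ(1)σ(2)} ⋯ b_{σ(2n-1)σ(2n)}`. -/
def pfSumInv (s : F) {n : ℕ} (b : Fin (2 * n) → Fin (2 * n) → R) : R :=
  ∑ σ : Equiv.Perm (Fin (2 * n)),
    if inPi' σ then ((-s) ^ (-(inversions σ : ℤ))) • pairProd b σ else 0

/-- The quantum Pfaffian with parameter `s⁻¹`, `Pf_{s⁻¹}(B)`. -/
def PfInv (s : F) {n : ℕ} (b : Fin (2 * n) → Fin (2 * n) → R) : R :=
  (qfac (s⁻¹ ^ 4) n)⁻¹ • pfSumInv s b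

/-- `Σ_{σ∈Π′} q^{l(σ)} b_{σ(1)σ(2)} ⋯ b_{σ(2n-1)σ(2n)}`. -/
def hfSum (q : F) {n : ℕ} (b : Fin (2 * n) → Fin (2 * n) → R) : R :=
  ∑ σ : Equiv.Perm (Fin (2 * n)), if inPi' σ then q ^ inversions σ • pairProd b σ else 0

/-- The quantum Hafnian `Hf_q(B)`. -/
def Hf (q : F) {n : ℕ} (b : Fin (2 * n) → Fin (2 * n) → R) : R :=
  (qfac (q ^ 4) n)⁻¹ • hfSum q b

/-- The `q`-Maya (`q`-Plücker) relations. -/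
def MayaRels (q : F) {n : ℕ} (b : Fin (2 * n) → Fin (2 * n) → R) : Prop :=
  ∀ i j k l : Fin (2 * n), i < j → j < k → k < l →
    b i j * b k l - q • (b i k * b j l) + q ^ 2 • (b i l * b j k) =
      b k l * b i j - q⁻¹ • (b j l * b i k) + q⁻¹ ^ 2 • (b j k * b i l)

/-- The `(−q)`-Maya relations. -/
def NegMayaRels (q : F) {n : ℕ} (b : Fin (2 * n) → Fin (2 * n) → R) : Prop :=
  ∀ i j k l : Fin (2 * n), i < j → j < k → k < l →
    b i j * b k l + q • (b i k * b j l) + q ^ 2 • (b i l * b j k) =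
      b k l * b i j + q⁻¹ • (b j l * b i k) + q⁻¹ ^ 2 • (b j k * b i l)

end Prelude

noncomputable section QE
variable {F : Type*} [Field F]

variable {F : Type*} [Field F]

/-- number of "crossings": pairs (a,b) ∈ A × B with b < a. -/
def inv2 {N : ℕ} (A B : Finset (Fin N)) : ℕ :=
  ((A ×ˢ B).filter fun p => p.2 < p.1).card

lemma inv2_union_left {N : ℕ} {A B C : Finset (Fin N)} (h : Disjoint A B) :
    inv2 (A ∪ B) C = inv2 A C + inv2 B C := by
  unfold inv2
  rw [Finset.union_product, Finset.filter_union, Finset.card_union_of_disjoint]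
  refine Finset.disjoint_filter_filter ?_
  rw [Finset.disjoint_left] at h ⊢
  rintro ⟨a, b⟩ hab hab'
  exact h (Finset.mem_product.1 hab).1 (Finset.mem_product.1 hab').1

lemma inv2_union_right {N : ℕ} {A B C : Finset (Fin N)} (h : Disjoint B C) :
    inv2 A (B ∪ C) = inv2 A B + inv2 A C := by
  unfold inv2
  rw [Finset.product_union, Finset.filter_union, Finset.card_union_of_disjoint]
  refine Finset.disjoint_filter_filter ?_
  rw [Finset.disjoint_left] at h ⊢
  rintro ⟨a, b⟩ hab hab'
  exact h (Finset.mem_product.1 hab).2 (Finset.mem_product.1 hab').2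

@[simp] lemma inv2_empty_left {N : ℕ} (B : Finset (Fin N)) : inv2 ∅ B = 0 := by
  simp [inv2]

@[simp] lemma inv2_empty_right {N : ℕ} (A : Finset (Fin N)) : inv2 A ∅ = 0 := by
  simp [inv2]

lemma inv2_singleton {N : ℕ} (i j : Fin N) :
    inv2 {i} {j} = if j < i then 1 else 0 := by
  unfold inv2
  rw [Finset.singleton_product_singleton]
  by_cases h : j < i <;> simp [Finset.filter_singleton, h]

lemma inv2_biUnion_right {N : ℕ} {k : ℕ} (A : Finset (Fin N)) (B : Fin k → Finset (Fin N))
    (s : Finset (Fin k)) (hd : ∀ t ∈ s, ∀ u ∈ s, t ≠ u → Disjoint (B t) (B u)) :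
    inv2 A (s.biUnion B) = ∑ u ∈ s, inv2 A (B u) := by
  induction s using Finset.induction_on with
  | empty => simp
  | @insert t s hts ih =>
    rw [Finset.biUnion_insert, Finset.sum_insert hts,
      inv2_union_right, ih]
    · intro x hx y hy hxy
      exact hd x (Finset.mem_insert_of_mem hx) y (Finset.mem_insert_of_mem hy) hxy
    · rw [Finset.disjoint_biUnion_right]
      intro u hu
      exact hd t (Finset.mem_insert_self _ _) u (Finset.mem_insert_of_mem hu)
        (fun h => hts (h ▸ hu))

/-- the sign/weight for moving block `A` past block `B`. -/
def qsgn (s : F) {N : ℕ} (A B : Finset (Fin N)) : F := (-s⁻¹) ^ inv2 A B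


/-- Quantum exterior algebra coefficients;
 on the monomial basis. -/
def QExt (F : Type*) [Field F] (s : F) (N : ℕ) (R : Type*) [Ring R] [Algebra F R] :=
  Finset (Fin N) → R

namespace QExt
variable {s : F} {N : ℕ} {R : Type*} [Ring R] [Algebra F R]

instance : AddCommGroup (QExt F s N R) := inferInstanceAs (AddCommGroup (Finset (Fin N) → R))
instance : Module F (QExt F s N R) := inferInstanceAs (Module F (Finset (Fin N) → R))

instance : Mul (QExt F s N R) :=
  ⟨fun x y S => ∑ A ∈ S.powerset, qsgn s A (S \ A) • (x A * y (S \ A))⟩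

instance : One (QExt F s N R) := ⟨fun S => if S = ∅ then 1 else 0⟩

lemma mul_def (x y : QExt F s N R) (S : Finset (Fin N)) :
    (x * y) S = ∑ A ∈ S.powerset, qsgn s A (S \ A) • (x A * y (S \ A)) := rfl

lemma one_def (S : Finset (Fin N)) : (1 : QExt F s N R) S = if S = ∅ then 1 else 0 := rfl

@[simp] lemma add_apply (x y : QExt F s N R) (S) : (x + y) S = x S + y S := rfl
@[simp] lemma smul_apply (c : F) (x : QExt F s N R) (S) : (c • x) S = c • x S := rfl
@[simp] lemma zero_apply (S : Finset (Fin N)) : (0 : QExt F s N R) S = 0 := rfl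

lemma qsgn_empty_left (B : Finset (Fin N)) : qsgn s ∅ B = 1 := by simp [qsgn]
lemma qsgn_empty_right (A : Finset (Fin N)) : qsgn s A ∅ = 1 := by simp [qsgn]

instance instRing : Ring (QExt F s N R) where
  __ := (inferInstance : AddCommGroup (QExt F s N R))
  mul := (· * ·)
  one := 1
  left_distrib x y z := by
    funext S
    show (x * (y + z)) S = _
    simp only [mul_def, add_apply, mul_add, smul_add, Finset.sum_add_distrib]
  right_distrib x y z := by
    funext S
    show ((x + y) * z) S = _
    simp only [mul_def, add_apply, add_mul, smul_add, Finset.sum_add_distrib]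
  zero_mul x := by funext S; show (0 * x) S = 0; simp [mul_def]
  mul_zero x := by funext S; show (x * 0) S = 0; simp [mul_def]
  one_mul x := by
    funext S
    show (1 * x) S = x S
    rw [mul_def, Finset.sum_eq_single ∅]
    · simp [one_def, qsgn_empty_left]
    · intro A hA hA'
      simp [one_def, hA']
    · intro h
      exact absurd (Finset.empty_mem_powerset S) h
  mul_one x := by
    funext S
    show (x * 1) S = x S
    rw [mul_def, Finset.sum_eq_single S]
    · simp [one_def, qsgn_empty_right]
    · intro A hA hA'
      have : S \ A ≠ ∅ := by
        intro h
        exact hA' (subset_antisymm (Finset.mem_powerset.1 hA)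
          (Finset.sdiff_eq_empty_iff_subset.1 h))
      simp [one_def, this]
    · intro h
      exact absurd (Finset.mem_powerset_self S) h
  mul_assoc x y z := by
    funext S
    show ((x * y) * z) S = (x * (y * z)) S
    simp only [mul_def, Finset.sum_mul, Finset.mul_sum, Finset.smul_sum, smul_mul_assoc,
      mul_smul_comm, smul_smul]
    rw [Finset.sum_sigma', Finset.sum_sigma']
    refine Finset.sum_bij' (fun p _ => ⟨p.2, p.1 \ p.2⟩) (fun p _ => ⟨p.1 ∪ p.2, p.1⟩)
      ?_ ?_ ?_ ?_ ?_
    · rintro ⟨D, A⟩ hp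
      rw [Finset.mem_sigma, Finset.mem_powerset, Finset.mem_powerset] at hp ⊢
      exact ⟨hp.2.trans hp.1, Finset.sdiff_subset_sdiff hp.1 subset_rfl⟩
    · rintro ⟨A, B⟩ hp
      rw [Finset.mem_sigma, Finset.mem_powerset, Finset.mem_powerset] at hp ⊢
      exact ⟨Finset.union_subset hp.1 (hp.2.trans Finset.sdiff_subset),
        Finset.subset_union_left⟩
    · rintro ⟨D, A⟩ hp
      rw [Finset.mem_sigma, Finset.mem_powerset, Finset.mem_powerset] at hp
      dsimp only
      rw [Finset.union_sdiff_of_subset hp.2]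
    · rintro ⟨A, B⟩ hp
      rw [Finset.mem_sigma, Finset.mem_powerset, Finset.mem_powerset] at hp
      have hd : Disjoint A B := (Finset.disjoint_sdiff.mono_right hp.2)
      dsimp only
      rw [Finset.union_sdiff_cancel_left hd]
    · rintro ⟨D, A⟩ hp
      rw [Finset.mem_sigma, Finset.mem_powerset, Finset.mem_powerset] at hp
      obtain ⟨hDS, hAD⟩ := hp
      have hset : (S \ A) \ (D \ A) = S \ D := by
        ext v
        simp only [Finset.mem_sdiff]
        constructor
        · rintro ⟨⟨hvS, hvA⟩, h2⟩
          refine ⟨hvS, fun hvD => h2 ⟨hvD, hvA⟩⟩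
        · rintro ⟨hvS, hvD⟩
          exact ⟨⟨hvS, fun hvA => hvD (hAD hvA)⟩, fun h => hvD h.1⟩
      rw [hset, mul_assoc]
      congr 1
      -- scalar identity
      have hDune : A ∪ (D \ A) = D := Finset.union_sdiff_of_subset hAD
      have hSA : (D \ A) ∪ (S \ D) = S \ A := by
        ext v
        simp only [Finset.mem_union, Finset.mem_sdiff]
        constructor
        · rintro (⟨h1, h2⟩ | ⟨h1, h2⟩)
          · exact ⟨hDS h1, h2⟩
          · exact ⟨h1, fun hvA => h2 (hAD hvA)⟩
        · rintro ⟨h1, h2⟩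
          by_cases hD : v ∈ D
          · exact Or.inl ⟨hD, h2⟩
          · exact Or.inr ⟨h1, hD⟩
      have e1 : inv2 D (S \ D) = inv2 A (S \ D) + inv2 (D \ A) (S \ D) := by
        have h := inv2_union_left (A := A) (B := D \ A) (C := S \ D) Finset.disjoint_sdiff
        rwa [hDune] at h
      have e2 : inv2 A (S \ A) = inv2 A (D \ A) + inv2 A (S \ D) := by
        rw [← hSA]
        exact inv2_union_right (Finset.disjoint_sdiff.mono_left Finset.sdiff_subset)
      simp only [qsgn, ← pow_add]
      rw [e1, e2]
      congr 1
      omega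


instance : SMulCommClass F (QExt F s N R) (QExt F s N R) where
  smul_comm c x y := by
    funext S
    show (c • (x * y)) S = (x * (c • y)) S
    rw [smul_apply, mul_def, mul_def, Finset.smul_sum]
    refine Finset.sum_congr rfl fun A hA => ?_
    rw [show ((c • y) (S \ A)) = c • y (S \ A) from rfl, mul_smul_comm, smul_comm]

instance : IsScalarTower F (QExt F s N R) (QExt F s N R) where
  smul_assoc c x y := by
    funext S
    show ((c • x) * y) S = (c • (x * y)) S
    rw [smul_apply, mul_def, mul_def, Finset.smul_sum]
    refine Finset.sum_congr rfl fun A hA => ?_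
    rw [show ((c • x) A) = c • x A from rfl, smul_mul_assoc, smul_comm]

/-- The element `ω_c = Σ_i a_{i,c} e_i` of the quantum exterior algebra. -/
def oml (s : F) (a : Fin N → Fin N → R) (c : Fin N) : QExt F s N R :=
  fun A => ∑ i ∈ A, if A = {i} then a i c else 0

lemma oml_singleton (a : Fin N → Fin N → R) (c i : Fin N) :
    oml s a c {i} = a i c := by
  simp [oml]

lemma oml_eq_zero (a : Fin N → Fin N → R) (c : Fin N) {A : Finset (Fin N)}
    (h : A.card ≠ 1) : oml s a c A = 0 := by
  refine Finset.sum_eq_zero fun i hi => ?_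
  rw [if_neg]
  intro hA
  exact h (hA ▸ Finset.card_singleton i)

lemma qsgn_singleton_left (i : Fin N) (B : Finset (Fin N)) :
    qsgn s {i} B = (-s⁻¹) ^ (B.filter (· < i)).card := by
  unfold qsgn inv2
  congr 1
  rw [Finset.singleton_product, Finset.filter_map, Finset.card_map]
  rfl

/-- Left multiplication by `ω_c`. -/
lemma oml_mul_apply (a : Fin N → Fin N → R) (c : Fin N) (x : QExt F s N R)
    (S : Finset (Fin N)) :
    (oml s a c * x) S
      = ∑ i ∈ S, qsgn s {i} (S \ {i}) • (a i c * x (S \ {i})) := by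
  rw [mul_def]
  have step : ∀ A ∈ S.powerset,
      qsgn s A (S \ A) • (oml s a c A * x (S \ A))
        = ∑ i ∈ S, if A = {i} then qsgn s A (S \ A) • (a i c * x (S \ A)) else 0 := by
    intro A hA
    rw [Finset.mem_powerset] at hA
    rw [oml, Finset.sum_mul, Finset.smul_sum, Finset.sum_subset hA]
    · refine Finset.sum_congr rfl fun i hi => ?_
      by_cases h : A = {i} <;> simp [h]
    · intro i hiS hiA
      rw [if_neg, zero_mul, smul_zero]
      intro hAi
      exact hiA (hAi ▸ Finset.mem_singleton_self i)
  rw [Finset.sum_congr rfl step, Finset.sum_comm]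
  refine Finset.sum_congr rfl fun i hi => ?_
  rw [Finset.sum_ite_eq' S.powerset ({i} : Finset (Fin N))
    (fun A => qsgn s A (S \ A) • (a i c * x (S \ A))),
    if_pos (Finset.mem_powerset.2 (Finset.singleton_subset_iff.2 hi))]

lemma pair_sdiff_left {i j : Fin N} (h : i ≠ j) : ({i, j} : Finset (Fin N)) \ {i} = {j} := by
  rw [Finset.sdiff_singleton_eq_erase, Finset.erase_insert]
  simpa using h

lemma pair_sdiff_right {i j : Fin N} (h : i ≠ j) : ({i, j} : Finset (Fin N)) \ {j} = {i} := by
  rw [Finset.pair_comm]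
  exact pair_sdiff_left h.symm

lemma qsgn_singleton_singleton_of_lt {i j : Fin N} (h : i < j) :
    qsgn s ({i} : Finset (Fin N)) {j} = 1 := by
  rw [qsgn_singleton_left, Finset.filter_singleton, if_neg (by omega), Finset.card_empty, pow_zero]

lemma qsgn_singleton_singleton_of_gt {i j : Fin N} (h : i < j) :
    qsgn s ({j} : Finset (Fin N)) {i} = -s⁻¹ := by
  rw [qsgn_singleton_left, Finset.filter_singleton, if_pos h, Finset.card_singleton, pow_one]

/-- The product of two `ω`'s evaluated at a two-element set. -/
lemma oml_mul_oml_pair (a : Fin N → Fin N → R) (c d : Fin N) {i j : Fin N} (hij : i < j) :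
    (oml s a c * oml s a d) {i, j}
      = a i c * a j d + (-s⁻¹) • (a j c * a i d) := by
  have hne : i ≠ j := ne_of_lt hij
  rw [oml_mul_apply, Finset.sum_pair hne, pair_sdiff_left hne, pair_sdiff_right hne,
    oml_singleton, oml_singleton, qsgn_singleton_singleton_of_lt hij,
    qsgn_singleton_singleton_of_gt hij, one_smul]

lemma oml_mul_oml_zero (a : Fin N → Fin N → R) (c d : Fin N) {S : Finset (Fin N)}
    (h : S.card ≠ 2) : (oml s a c * oml s a d) S = 0 := by
  rw [oml_mul_apply]
  refine Finset.sum_eq_zero fun i hi => ?_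
  rw [oml_eq_zero]
  · rw [mul_zero, smul_zero]
  · rw [Finset.card_sdiff_of_subset (Finset.singleton_subset_iff.2 hi), Finset.card_singleton]
    have : 0 < S.card := Finset.card_pos.2 ⟨i, hi⟩
    omega

section Rels
variable {r : F} {a : Fin N → Fin N → R}

/-- `ω_k ω_l = -s ω_l ω_k` for `k < l`. -/
lemma omega_rel_lt (hs : s ≠ 0) (ha : IsQSemigroup r s a) {k l : Fin N} (hkl : k < l) :
    oml s a k * oml s a l = (-s) • (oml s a l * oml s a k) := by
  obtain ⟨ha1, ha2, ha3, ha4⟩ := ha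
  have key : ∀ i j : Fin N, i < j →
      (oml s a k * oml s a l) {i, j} = ((-s) • (oml s a l * oml s a k)) {i, j} := by
    intro i j hij
    rw [smul_apply, oml_mul_oml_pair a k l hij, oml_mul_oml_pair a l k hij]
    have e4 : a i k * a j l = a j l * a i k + (r - s) • (a i l * a j k) :=
      by
      have h := ha4 i j k l hij hkl
      rw [sub_eq_iff_eq_add] at h
      rw [h]
      abel
    have e3 : (-s⁻¹) • (a j k * a i l) = (-r) • (a i l * a j k) := by
      rw [neg_smul, neg_smul, ← ha3 i j k l hij hkl]
    rw [e4, e3, smul_add, smul_smul,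
      show (-s) * (-s⁻¹) = 1 by field_simp, one_smul, add_assoc, ← add_smul,
      show r - s + -r = -s by ring, add_comm]
  funext S
  by_cases h2 : S.card = 2
  · obtain ⟨x, y, hxy, rfl⟩ := Finset.card_eq_two.1 h2
    rcases lt_or_gt_of_ne hxy with h | h
    · exact key x y h
    · rw [Finset.pair_comm]
      exact key y x h
  · rw [smul_apply, oml_mul_oml_zero a k l h2, oml_mul_oml_zero a l k h2, smul_zero]

/-- `ω_k ω_k = 0`. -/
lemma omega_sq (hs : s ≠ 0) (ha : IsQSemigroup r s a) (k : Fin N) :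
    oml s a k * oml s a k = 0 := by
  obtain ⟨ha1, ha2, ha3, ha4⟩ := ha
  funext S
  by_cases h2 : S.card = 2
  · obtain ⟨x, y, hxy, rfl⟩ := Finset.card_eq_two.1 h2
    have key : ∀ i j : Fin N, i < j →
        (oml s a k * oml s a k) {i, j} = 0 := by
      intro i j hij
      rw [oml_mul_oml_pair a k k hij, ha2 i j k hij, neg_smul, add_neg_cancel]
    rcases lt_or_gt_of_ne hxy with h | h
    · exact key x y h
    · rw [Finset.pair_comm]; exact key y x h
  · exact oml_mul_oml_zero a k k h2

/-- `ω_k ω_l = -s⁻¹ ω_l ω_k` for `l < k`. -/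
lemma omega_rel_gt (hs : s ≠ 0) (ha : IsQSemigroup r s a) {k l : Fin N} (hlk : l < k) :
    oml s a k * oml s a l = (-s⁻¹) • (oml s a l * oml s a k) := by
  rw [omega_rel_lt hs ha hlk, smul_smul, show (-s⁻¹) * (-s) = 1 by field_simp, one_smul]

end Rels

section Sorting
variable {Q : Type*} [Ring Q] [Module F Q] [SMulCommClass F Q Q] [IsScalarTower F Q Q]

/-- move an element through a product of two. -/
lemma swap3 {x y : Q} {α : F} (h : y * x = α • (x * y)) (u v : Q) :
    u * y * (x * v) = α • (u * x * (y * v)) := by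
  calc u * y * (x * v) = u * (y * x) * v := by
        rw [mul_assoc u y (x * v), ← mul_assoc y x v, ← mul_assoc u (y * x) v]
    _ = α • (u * (x * y) * v) := by rw [h, mul_smul_comm, smul_mul_assoc]
    _ = α • (u * x * (y * v)) := by rw [← mul_assoc u x y, mul_assoc (u * x) y v]

variable {n : ℕ} {θ : Fin n → Q} {q : F}

lemma theta_insert (hcomm : ∀ {m m' : Fin n}, m < m' → θ m' * θ m = q • (θ m * θ m'))
    (hsq : ∀ m, θ m * θ m = 0) :
    ∀ (l : List (Fin n)), l.Pairwise (· < ·) → ∀ m : Fin n,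
    θ m * (l.map θ).prod =
      if m ∈ l then 0
      else q ^ (l.filter (· < m)).length • ((l.orderedInsert (· ≤ ·) m).map θ).prod := by
  intro l
  induction l with
  | nil =>
    intro _ m
    simp [List.orderedInsert]
  | cons b t ih =>
    intro hsort m
    rw [List.pairwise_cons] at hsort
    rcases lt_trichotomy m b with hmb | hmb | hmb
    · have hml : m ∉ b :: t := by
        intro h
        rcases List.mem_cons.1 h with h | h
        · omega
        · exact absurd (hsort.1 m h) (by omega)
      rw [if_neg hml]
      have hfil : (b :: t).filter (· < m) = [] := by
        rw [List.filter_eq_nil_iff]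
        intro x hx
        rcases List.mem_cons.1 hx with h | h
        · simp only [decide_eq_true_eq]; omega
        · have := hsort.1 x h
          simp only [decide_eq_true_eq]; omega
      rw [hfil, List.length_nil, pow_zero, one_smul,
        List.orderedInsert, if_pos (le_of_lt hmb)]
      simp [List.prod_cons]
    · subst hmb
      rw [if_pos List.mem_cons_self, List.map_cons, List.prod_cons,
        ← mul_assoc, hsq m, zero_mul]
    · have hcb : θ m * θ b = q • (θ b * θ m) := hcomm hmb
      rw [List.map_cons, List.prod_cons, ← mul_assoc, hcb, smul_mul_assoc, mul_assoc,
        ih hsort.2 m]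
      by_cases hmt : m ∈ t
      · rw [if_pos hmt, if_pos (List.mem_cons_of_mem b hmt), mul_zero, smul_zero]
      · have hmbt : m ∉ b :: t := by
          intro h
          rcases List.mem_cons.1 h with h | h
          · omega
          · exact hmt h
        rw [if_neg hmt, if_neg hmbt]
        have hfil : (b :: t).filter (· < m) = b :: t.filter (· < m) := by
          rw [List.filter_cons, if_pos (by simpa using hmb)]
        rw [hfil, List.length_cons, List.orderedInsert, if_neg (by omega),
          List.map_cons, List.prod_cons, mul_smul_comm, smul_smul]
        ring_nf

/-- ordered product of `θ`'s over a finite set of indices. -/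
def thetaProd (θ : Fin n → Q) (A : Finset (Fin n)) : Q := ((A.sort (· ≤ ·)).map θ).prod

lemma length_filter_sort (A : Finset (Fin n)) (m : Fin n) :
    ((A.sort (· ≤ ·)).filter (· < m)).length = (A.filter (· < m)).card := by
  have hp : ((A.sort (· ≤ ·) : List (Fin n)) : Multiset (Fin n)) = A.val := Finset.sort_eq A _
  have h2 : ((A.sort (· ≤ ·)).filter (· < m) : Multiset (Fin n))
      = Multiset.filter (· < m) (A.val) := by
    rw [← hp, Multiset.filter_coe]
  calc ((A.sort (· ≤ ·)).filter (· < m)).length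
      = Multiset.card ((A.sort (· ≤ ·)).filter (· < m) : Multiset (Fin n)) := by simp
    _ = Multiset.card (Multiset.filter (· < m) A.val) := by rw [h2]
    _ = (A.filter (· < m)).card := rfl

lemma sort_insert_eq {A : Finset (Fin n)} {m : Fin n} (hm : m ∉ A) :
    (insert m A).sort (· ≤ ·) = (A.sort (· ≤ ·)).orderedInsert (· ≤ ·) m := by
  refine List.Perm.eq_of_pairwise' (Finset.pairwise_sort _ _)
    (List.Pairwise.orderedInsert m _ (Finset.pairwise_sort _ _)) ?_
  rw [← Multiset.coe_eq_coe]
  calc ((insert m A).sort (· ≤ ·) : Multiset (Fin n)) = (insert m A).val :=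
        Finset.sort_eq _ _
    _ = m ::ₘ A.val := Finset.insert_val_of_notMem hm
    _ = m ::ₘ ((A.sort (· ≤ ·) : List (Fin n)) : Multiset (Fin n)) := by
        rw [Finset.sort_eq]
    _ = ((m :: A.sort (· ≤ ·) : List (Fin n)) : Multiset (Fin n)) := rfl
    _ = (((A.sort (· ≤ ·)).orderedInsert (· ≤ ·) m : List (Fin n)) : Multiset (Fin n)) := by
        rw [Multiset.coe_eq_coe]
        exact (List.perm_orderedInsert _ m _).symm

lemma theta_mul_thetaProd (hcomm : ∀ {m m' : Fin n}, m < m' → θ m' * θ m = q • (θ m * θ m'))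
    (hsq : ∀ m, θ m * θ m = 0) (A : Finset (Fin n)) (m : Fin n) :
    θ m * thetaProd θ A
      = if m ∈ A then 0
        else q ^ (A.filter (· < m)).card • thetaProd θ (insert m A) := by
  have h := theta_insert hcomm hsq (A.sort (· ≤ ·)) (Finset.sortedLT_sort A).pairwise m
  rw [thetaProd, h]
  by_cases hm : m ∈ A
  · rw [if_pos (by rwa [Finset.mem_sort]), if_pos hm]
  · rw [if_neg (by rwa [Finset.mem_sort]), if_neg hm, length_filter_sort,
      thetaProd, sort_insert_eq hm]

lemma sum_pow_rank (q : F) (B : Finset (Fin n)) :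
    ∑ m ∈ B, q ^ (B.filter (· < m)).card = qint q B.card := by
  induction B using Finset.induction_on_min with
  | empty => simp [qint]
  | insert a s hmin ih =>
    have ha : a ∉ s := fun h => absurd (hmin a h) (lt_irrefl a)
    rw [Finset.sum_insert ha]
    have h1 : (insert a s).filter (· < a) = ∅ := by
      rw [Finset.filter_eq_empty_iff]
      intro x hx
      rcases Finset.mem_insert.1 hx with h | h
      · omega
      · have := hmin x h; omega
    have h2 : ∀ m ∈ s, (insert a s).filter (· < m) = insert a (s.filter (· < m)) := by
      intro m hm
      rw [Finset.filter_insert, if_pos (hmin m hm)]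
    rw [h1, Finset.card_empty, pow_zero,
      Finset.sum_congr rfl fun m hm => by
        rw [h2 m hm, Finset.card_insert_of_notMem
          (fun h => ha (Finset.mem_of_mem_filter a h)), pow_succ]]
    rw [← Finset.sum_mul, ih, Finset.card_insert_of_notMem ha, qint, qint,
      Finset.sum_range_succ']
    simp only [pow_succ]
    rw [Finset.sum_mul, pow_zero]
    ring

lemma omega_pow (hcomm : ∀ {m m' : Fin n}, m < m' → θ m' * θ m = q • (θ m * θ m'))
    (hsq : ∀ m, θ m * θ m = 0) (k : ℕ) :
    (∑ m : Fin n, θ m) ^ k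
      = qfac q k • ∑ A ∈ Finset.univ.powersetCard k, thetaProd θ A := by
  induction k with
  | zero =>
    rw [pow_zero, Finset.powersetCard_zero, Finset.sum_singleton]
    rw [show thetaProd θ ∅ = 1 by rw [thetaProd, Finset.sort_empty]; rfl]
    rw [show qfac q 0 = 1 by rw [qfac]; simp, one_smul]
  | succ k ih =>
    rw [pow_succ', ih, mul_smul_comm, Finset.mul_sum]
    have step1 : ∀ A ∈ Finset.univ.powersetCard k, (∑ m : Fin n, θ m) * thetaProd θ A
        = ∑ m ∈ Finset.univ.filter (· ∉ A),
            q ^ (A.filter (· < m)).card • thetaProd θ (insert m A) := by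
      intro A _
      rw [Finset.sum_mul, Finset.sum_filter]
      refine Finset.sum_congr rfl fun m _ => ?_
      rw [theta_mul_thetaProd hcomm hsq A m]
      by_cases hm : m ∈ A <;> simp [hm]
    rw [Finset.sum_congr rfl step1, Finset.sum_sigma']
    have step2 : ∑ B ∈ Finset.univ.powersetCard (k + 1), qint q (k+1) • thetaProd θ B
        = ∑ p ∈ (Finset.univ.powersetCard k).sigma
            (fun A => Finset.univ.filter (· ∉ A)),
            q ^ ((p.1.filter (· < p.2)).card) • thetaProd θ (insert p.2 p.1) := by
      have exp : ∀ B ∈ Finset.univ.powersetCard (k + 1),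
          qint q (k+1) • thetaProd θ B
            = ∑ m ∈ Finset.univ.filter (· ∈ B),
                q ^ ((B.filter (· < m)).card) • thetaProd θ B := by
        intro B hB
        rw [Finset.filter_univ_mem, ← Finset.sum_smul, sum_pow_rank,
          (Finset.mem_powersetCard.1 hB).2]
      rw [Finset.sum_congr rfl exp, Finset.sum_sigma']
      refine Finset.sum_bij' (fun p _ => ⟨p.1.erase p.2, p.2⟩)
        (fun p _ => ⟨insert p.2 p.1, p.2⟩) ?_ ?_ ?_ ?_ ?_
      · rintro ⟨B, m⟩ hp
        rw [Finset.mem_sigma] at hp ⊢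
        obtain ⟨hB, hm⟩ := hp
        rw [Finset.mem_filter] at hm
        rw [Finset.mem_powersetCard] at hB
        constructor
        · rw [Finset.mem_powersetCard]
          refine ⟨Finset.subset_univ _, ?_⟩
          rw [Finset.card_erase_of_mem hm.2, hB.2]
          omega
        · rw [Finset.mem_filter]
          exact ⟨Finset.mem_univ _, Finset.notMem_erase _ _⟩
      · rintro ⟨A, m⟩ hp
        rw [Finset.mem_sigma] at hp ⊢
        obtain ⟨hA, hm⟩ := hp
        rw [Finset.mem_filter] at hm
        rw [Finset.mem_powersetCard] at hA
        constructor
        · rw [Finset.mem_powersetCard]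
          exact ⟨Finset.subset_univ _, by rw [Finset.card_insert_of_notMem hm.2, hA.2]⟩
        · rw [Finset.mem_filter]
          exact ⟨Finset.mem_univ _, Finset.mem_insert_self _ _⟩
      · rintro ⟨B, m⟩ hp
        rw [Finset.mem_sigma] at hp
        have hm : m ∈ B := (Finset.mem_filter.1 hp.2).2
        dsimp only
        rw [Finset.insert_erase hm]
      · rintro ⟨A, m⟩ hp
        rw [Finset.mem_sigma] at hp
        have hm : m ∉ A := (Finset.mem_filter.1 hp.2).2
        dsimp only
        rw [Finset.erase_insert hm]
      · rintro ⟨B, m⟩ hp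
        rw [Finset.mem_sigma] at hp
        have hm : m ∈ B := (Finset.mem_filter.1 hp.2).2
        have hfe : (B.erase m).filter (· < m) = B.filter (· < m) := by
          ext x
          simp only [Finset.mem_filter, Finset.mem_erase]
          constructor
          · rintro ⟨⟨_, hx⟩, hlt⟩; exact ⟨hx, hlt⟩
          · rintro ⟨hx, hlt⟩; exact ⟨⟨by omega, hx⟩, hlt⟩
        dsimp only
        rw [Finset.insert_erase hm, hfe]
    rw [← step2, ← Finset.smul_sum, smul_smul,
      show qfac q k * qint q (k+1) = qfac q (k+1) from (Finset.prod_range_succ _ _).symm]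

end Sorting

section Master
variable {s : F} {N : ℕ} {R : Type*} [Ring R] [Algebra F R]

/-- The system-of-blocks condition. -/
def sysCond {N : ℕ} (d k : ℕ) (A : Fin k → Finset (Fin N)) (S : Finset (Fin N)) : Prop :=
  (∀ t, (A t).card = d) ∧ (∀ t u : Fin k, t < u → Disjoint (A t) (A u)) ∧
    Finset.univ.biUnion A = S

/-- Total number of crossings between the blocks. -/
def crossinv {N k : ℕ} (A : Fin k → Finset (Fin N)) : ℕ :=
  ∑ p : Fin k × Fin k, if p.1 < p.2 then inv2 (A p.1) (A p.2) else 0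

lemma biUnion_cons {N k : ℕ} (A₀ : Finset (Fin N)) (A' : Fin k → Finset (Fin N)) :
    Finset.univ.biUnion (Fin.cons A₀ A') = A₀ ∪ Finset.univ.biUnion A' := by
  ext v
  simp only [Finset.mem_biUnion, Finset.mem_union, Finset.mem_univ, true_and]
  constructor
  · rintro ⟨i, hi⟩
    rcases Fin.eq_zero_or_eq_succ i with rfl | ⟨i', rfl⟩
    · exact Or.inl (by simpa using hi)
    · exact Or.inr ⟨i', by simpa [Fin.cons_succ] using hi⟩
  · rintro (h | ⟨i', h⟩)
    · exact ⟨0, by simpa using h⟩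
    · exact ⟨i'.succ, by simpa [Fin.cons_succ] using h⟩

lemma crossinv_cons {N k : ℕ} (A₀ : Finset (Fin N)) (A' : Fin k → Finset (Fin N)) :
    crossinv (Fin.cons A₀ A')
      = (∑ u : Fin k, inv2 A₀ (A' u)) + crossinv A' := by
  unfold crossinv
  rw [Fintype.sum_prod_type, Fin.sum_univ_succ]
  congr 1
  · rw [Fin.sum_univ_succ]
    dsimp only
    rw [if_neg (lt_irrefl _), zero_add]
    refine Finset.sum_congr rfl fun u _ => ?_
    simp only [Fin.cons_zero, Fin.cons_succ, if_pos (Fin.succ_pos u)]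
  · rw [Fintype.sum_prod_type]
    refine Finset.sum_congr rfl fun t _ => ?_
    rw [Fin.sum_univ_succ]
    dsimp only
    rw [if_neg (by simp [Fin.lt_def]), zero_add]
    refine Finset.sum_congr rfl fun u _ => ?_
    simp only [Fin.cons_succ, Fin.succ_lt_succ_iff]

/-- Master expansion: the product of `d`-homogeneous elements of the quantum
exterior algebra, coefficient-wise. -/
lemma master (d : ℕ) : ∀ (k : ℕ) (x : Fin k → QExt F s N R),
    (∀ t S, S.card ≠ d → x t S = 0) → ∀ S : Finset (Fin N),
    (List.ofFn fun t => x t).prod S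
      = ∑ A : Fin k → Finset (Fin N),
          if sysCond d k A S
          then (-s⁻¹) ^ crossinv A • (List.ofFn fun t => x t (A t)).prod else 0 := by
  intro k
  induction k with
  | zero =>
    intro x hx S
    have hcond : ∀ A : Fin 0 → Finset (Fin N), sysCond d 0 A S ↔ S = ∅ := by
      intro A
      constructor
      · rintro ⟨-, -, h⟩
        rw [← h]
        simp
      · rintro rfl
        exact ⟨fun t => t.elim0, fun t u _ => t.elim0, by simp⟩
    have hcvz : ∀ A : Fin 0 → Finset (Fin N), crossinv A = 0 := fun A => by simp [crossinv]
    rw [List.ofFn_zero, List.prod_nil, Fintype.sum_unique, QExt.one_def]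
    by_cases hS : S = ∅
    · rw [if_pos hS, if_pos ((hcond _).2 hS), hcvz,
        List.ofFn_zero, List.prod_nil, pow_zero, one_smul]
    · rw [if_neg hS, if_neg (fun h => hS ((hcond _).1 h))]
  | succ k ih =>
    intro x hx S
    have lhs1 : (List.ofFn fun t : Fin (k+1) => x t).prod
        = x 0 * (List.ofFn fun t : Fin k => x t.succ).prod := by
      rw [List.ofFn_succ, List.prod_cons]
    rw [lhs1, QExt.mul_def,
      Finset.sum_congr rfl (fun A₀ _ => by
        rw [ih (fun t => x t.succ) (fun t S h => hx t.succ S h) (S \ A₀)])]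
    -- reindex the RHS over `Fin.cons`
    have hre : (∑ A : Fin (k+1) → Finset (Fin N),
        if sysCond d (k+1) A S then (-s⁻¹) ^ crossinv A • (List.ofFn fun t => x t (A t)).prod
        else 0)
        = ∑ A₀ : Finset (Fin N), ∑ A' : Fin k → Finset (Fin N),
            if sysCond d (k+1) (Fin.cons A₀ A') S
            then (-s⁻¹) ^ crossinv (Fin.cons A₀ A') •
              (List.ofFn fun t => x t ((Fin.cons A₀ A' : ∀ _ : Fin (k+1), Finset (Fin N)) t)).prod
            else 0 := by
      rw [← (Fin.consEquiv (fun _ : Fin (k+1) => Finset (Fin N))).sum_comp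
        (fun A => if sysCond d (k+1) A S
          then (-s⁻¹) ^ crossinv A • (List.ofFn fun t => x t (A t)).prod else 0),
        Fintype.sum_prod_type]
      rfl
    rw [hre]
    rw [← Finset.sum_subset (Finset.subset_univ S.powerset) ?_]
    swap
    · intro A₀ _ hA₀
      refine Finset.sum_eq_zero fun A' _ => ?_
      rw [if_neg]
      rintro ⟨-, -, hU⟩
      refine hA₀ (Finset.mem_powerset.2 ?_)
      rw [← hU]
      exact Finset.subset_biUnion_of_mem
        (Fin.cons A₀ A' : ∀ _ : Fin (k+1), Finset (Fin N)) (Finset.mem_univ 0)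
    refine Finset.sum_congr rfl fun A₀ hA₀ => ?_
    rw [Finset.mem_powerset] at hA₀
    rw [Finset.mul_sum, Finset.smul_sum]
    refine Finset.sum_congr rfl fun A' _ => ?_
    set Ac : ∀ _ : Fin (k+1), Finset (Fin N) := Fin.cons A₀ A' with hAc
    have hAc0 : Ac 0 = A₀ := rfl
    have hAcs : ∀ t : Fin k, Ac t.succ = A' t := fun t => rfl
    by_cases hd : A₀.card = d
    · by_cases hc' : sysCond d k A' (S \ A₀)
      · obtain ⟨hc1, hc2, hc3⟩ := id hc'
        have hdisj : ∀ u : Fin k, Disjoint A₀ (A' u) := by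
          intro u
          have hsub : A' u ⊆ S \ A₀ := by
            rw [← hc3]
            exact Finset.subset_biUnion_of_mem _ (Finset.mem_univ u)
          exact Finset.disjoint_sdiff.mono_right hsub
        have hcons : sysCond d (k+1) Ac S := by
          refine ⟨?_, ?_, ?_⟩
          · intro t
            rcases Fin.eq_zero_or_eq_succ t with rfl | ⟨t', rfl⟩
            · rw [hAc0]; exact hd
            · rw [hAcs]; exact hc1 t'
          · intro t u htu
            rcases Fin.eq_zero_or_eq_succ t with rfl | ⟨t', rfl⟩
            · rcases Fin.eq_zero_or_eq_succ u with rfl | ⟨u', rfl⟩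
              · exact absurd htu (lt_irrefl _)
              · rw [hAc0, hAcs]; exact hdisj u'
            · rcases Fin.eq_zero_or_eq_succ u with rfl | ⟨u', rfl⟩
              · exact absurd htu (by simp [Fin.lt_def])
              · rw [hAcs, hAcs]; exact hc2 t' u' (Fin.succ_lt_succ_iff.1 htu)
          · show Finset.univ.biUnion Ac = S
            rw [hAc, biUnion_cons, hc3, Finset.union_sdiff_of_subset hA₀]
        have hexp : crossinv Ac = inv2 A₀ (S \ A₀) + crossinv A' := by
          rw [hAc, crossinv_cons]
          congr 1
          rw [← hc3, inv2_biUnion_right A₀ A' Finset.univ (by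
            intro t _ u _ htu
            rcases lt_or_gt_of_ne htu with h | h
            · exact hc2 t u h
            · exact (hc2 u t h).symm)]
        have hprod : (List.ofFn fun t : Fin (k+1) => x t (Ac t)).prod
            = x 0 A₀ * (List.ofFn fun t : Fin k => x t.succ (A' t)).prod := by
          rw [List.ofFn_succ, List.prod_cons]
          rfl
        rw [if_pos hc', if_pos hcons, hexp, pow_add, hprod, mul_smul_comm, smul_smul, qsgn]
      · rw [if_neg hc', mul_zero, smul_zero, if_neg]
        intro hcons
        obtain ⟨h1, h2, h3⟩ := hcons
        refine hc' ⟨?_, ?_, ?_⟩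
        · intro t
          have := h1 t.succ
          rwa [hAcs] at this
        · intro t u htu
          have := h2 t.succ u.succ (Fin.succ_lt_succ_iff.2 htu)
          rwa [hAcs, hAcs] at this
        · have hdA : Disjoint A₀ (Finset.univ.biUnion A') := by
            rw [Finset.disjoint_biUnion_right]
            intro u _
            have := h2 0 u.succ (Fin.succ_pos u)
            rwa [hAc0, hAcs] at this
          have hU : A₀ ∪ Finset.univ.biUnion A' = S := by
            rw [← biUnion_cons A₀ A', ← hAc]
            exact h3
          rw [← hU, Finset.union_sdiff_cancel_left hdA]
    · rw [hx 0 A₀ hd, zero_mul, smul_zero, if_neg]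
      rintro ⟨h1, -, -⟩
      have := h1 0
      rw [hAc0] at this
      exact hd this
end Master

section Cdet
variable {s : F} {N : ℕ} {R : Type*} [Ring R] [Algebra F R]

lemma crossinv_singletons (σ : Equiv.Perm (Fin N)) :
    crossinv (fun t => ({σ t} : Finset (Fin N))) = inversions σ := by
  unfold crossinv inversions
  rw [Finset.card_filter]
  refine Finset.sum_congr rfl fun p _ => ?_
  rw [inv2_singleton]
  by_cases h1 : p.1 < p.2 <;> by_cases h2 : σ p.2 < σ p.1 <;> simp [h1, h2]

lemma zpow_neg_inv (s : F) (l : ℕ) : ((-s) : F) ^ (-(l : ℤ)) = (-s⁻¹) ^ l := by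
  rw [zpow_neg, zpow_natCast, ← inv_pow, inv_neg]

/-- the row expansion of the quantum column determinant. -/
lemma prod_oml_univ (a : Fin N → Fin N → R) :
    (List.ofFn fun t : Fin N => oml s a t).prod Finset.univ = cdet s a := by
  rw [master 1 N (fun t => oml s a t) (fun t S h => oml_eq_zero a t h) Finset.univ,
    ← Finset.sum_filter, cdet]
  refine (Finset.sum_bij
    (fun (σ : Equiv.Perm (Fin N)) _ => fun t => ({σ t} : Finset (Fin N)))
    ?_ ?_ ?_ ?_).symm
  · intro σ _
    rw [Finset.mem_filter]
    refine ⟨Finset.mem_univ _, ⟨fun t => Finset.card_singleton _, ?_, ?_⟩⟩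
    · intro t u htu
      rw [Finset.disjoint_singleton]
      exact fun h => (ne_of_lt htu) (σ.injective h)
    · ext v
      simp only [Finset.mem_biUnion, Finset.mem_singleton, Finset.mem_univ, true_and, iff_true]
      exact ⟨σ.symm v, (σ.apply_symm_apply v).symm⟩
  · intro σ1 _ σ2 _ h
    exact Equiv.ext fun t => Finset.singleton_injective (congrFun h t)
  · intro A hA
    rw [Finset.mem_filter] at hA
    obtain ⟨-, h1, h2, h3⟩ := hA
    choose v hv using fun t => Finset.card_eq_one.1 (h1 t)
    have hinj : Function.Injective v := by
      intro t u htu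
      by_contra hne
      have hd : Disjoint (A t) (A u) := by
        rcases lt_or_gt_of_ne hne with h | h
        · exact h2 t u h
        · exact (h2 u t h).symm
      have : v t ∈ A t := by rw [hv t]; exact Finset.mem_singleton_self _
      have h2' : v t ∈ A u := by rw [hv u, htu]; exact Finset.mem_singleton_self _
      exact Finset.disjoint_left.1 hd this h2'
    refine ⟨Equiv.ofBijective v (Finite.injective_iff_bijective.1 hinj), Finset.mem_univ _, ?_⟩
    funext t
    rw [hv t]
    rfl
  · intro σ _
    rw [crossinv_singletons, zpow_neg_inv]
    congr 1
    refine congrArg List.prod (congrArg List.ofFn ?_)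
    funext t
    rw [oml_singleton]
end Cdet

section PfSide
variable {s : F} {n : ℕ} {R : Type*} [Ring R] [Algebra F R]

lemma pL_lt_pL_iff {t u : Fin n} : (pL t : Fin (2*n)) < pL u ↔ t < u := by
  simp only [pL, Fin.lt_def]; omega

lemma pL_lt_pR_iff {t u : Fin n} : (pL t : Fin (2*n)) < pR u ↔ t ≤ u := by
  simp only [pL, pR, Fin.lt_def, Fin.le_def]; omega

lemma pR_lt_pL_iff {t u : Fin n} : (pR t : Fin (2*n)) < pL u ↔ t < u := by
  simp only [pL, pR, Fin.lt_def]; omega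

lemma pR_lt_pR_iff {t u : Fin n} : (pR t : Fin (2*n)) < pR u ↔ t < u := by
  simp only [pR, Fin.lt_def]; omega

lemma pL_lt_pR_self (t : Fin n) : (pL t : Fin (2*n)) < pR t := pL_lt_pR_iff.2 le_rfl

lemma pL_ne_pR (t u : Fin n) : (pL t : Fin (2*n)) ≠ pR u := by
  simp only [pL, pR, ne_eq, Fin.mk.injEq]
  omega

lemma exists_pLR (p : Fin (2*n)) : ∃ t : Fin n, p = pL t ∨ p = pR t := by
  refine ⟨⟨p.1/2, by have := p.2; omega⟩, ?_⟩
  rcases Nat.even_or_odd p.1 with ⟨c, hc⟩ | ⟨c, hc⟩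
  · left; apply Fin.ext; simp only [pL]; omega
  · right; apply Fin.ext; simp only [pR]; omega

/-- splitting a sum over positions into blocks. -/
lemma pL_injective : Function.Injective (pL : Fin n → Fin (2*n)) := by
  intro t u h
  rw [Fin.ext_iff] at h ⊢
  simp only [pL] at h
  omega

lemma pR_injective : Function.Injective (pR : Fin n → Fin (2*n)) := by
  intro t u h
  rw [Fin.ext_iff] at h ⊢
  simp only [pR] at h
  omega

lemma univ_eq_pLR : (Finset.univ : Finset (Fin (2*n)))
    = (Finset.univ.image pL) ∪ (Finset.univ.image pR) := by
  ext p
  simp only [Finset.mem_univ, true_iff, Finset.mem_union, Finset.mem_image]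
  obtain ⟨t, ht | ht⟩ := exists_pLR p
  · exact Or.inl ⟨t, trivial, ht.symm⟩
  · exact Or.inr ⟨t, trivial, ht.symm⟩

lemma sum_split {M : Type*} [AddCommMonoid M] (h : Fin (2*n) → M) :
    ∑ p : Fin (2*n), h p = ∑ t : Fin n, (h (pL t) + h (pR t)) := by
  rw [show ∑ p : Fin (2*n), h p = ∑ p ∈ (Finset.univ.image pL) ∪ (Finset.univ.image pR), h p
      from by rw [← univ_eq_pLR]]
  rw [Finset.sum_union (by
    rw [Finset.disjoint_left]
    rintro p hp hp'
    obtain ⟨t, -, rfl⟩ := Finset.mem_image.1 hp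
    obtain ⟨u, -, hu⟩ := Finset.mem_image.1 hp'
    exact pL_ne_pR t u hu.symm)]
  rw [Finset.sum_image (fun t _ u _ h => pL_injective h),
    Finset.sum_image (fun t _ u _ h => pR_injective h), ← Finset.sum_add_distrib]

lemma inv2_pair (a1 a2 b1 b2 : Fin (2*n)) (ha : a1 ≠ a2) (hb : b1 ≠ b2) :
    inv2 ({a1, a2} : Finset (Fin (2*n))) {b1, b2}
      = (((if b1 < a1 then 1 else 0) + (if b2 < a1 then 1 else 0))
        + (((if b1 < a2 then 1 else 0) + (if b2 < a2 then 1 else 0)))) := by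
  unfold inv2
  rw [Finset.card_filter, Finset.sum_product, Finset.sum_pair ha, Finset.sum_pair hb,
    Finset.sum_pair hb]

lemma pair_eq_of_lt {i j i' j' : Fin (2*n)} (h1 : i < j) (h2 : i' < j')
    (h : ({i, j} : Finset (Fin (2*n))) = {i', j'}) : i = i' ∧ j = j' := by
  have hii : i = i' ∨ i = j' := by
    have : i ∈ ({i', j'} : Finset (Fin (2*n))) := by
      rw [← h]; exact Finset.mem_insert_self _ _
    simpa using this
  have hjj : j = i' ∨ j = j' := by
    have : j ∈ ({i', j'} : Finset (Fin (2*n))) := by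
      rw [← h]; exact Finset.mem_insert_of_mem (Finset.mem_singleton_self _)
    simpa using this
  have hii' : i' = i ∨ i' = j := by
    have : i' ∈ ({i, j} : Finset (Fin (2*n))) := by
      rw [h]; exact Finset.mem_insert_self _ _
    simpa using this
  rw [Fin.lt_def] at h1 h2
  rcases hii with h3 | h3 <;> rcases hjj with h4 | h4 <;> rcases hii' with h5 | h5 <;>
    rw [Fin.ext_iff] at * <;> constructor <;> omega
end PfSide

section PfSide2
variable {s : F} {n : ℕ} {R : Type*} [Ring R] [Algebra F R]

lemma crossinv_pairs {σ : Equiv.Perm (Fin (2*n))} (hσ : inPi' σ) :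
    crossinv (fun t => ({σ (pL t), σ (pR t)} : Finset (Fin (2*n)))) = inversions σ := by
  have hne : ∀ t : Fin n, σ (pL t) ≠ σ (pR t) :=
    fun t h => pL_ne_pR t t (σ.injective h)
  have key : ∀ t u : Fin n,
      (if t < u then inv2 ({σ (pL t), σ (pR t)} : Finset (Fin (2*n))) {σ (pL u), σ (pR u)} else 0)
      = (((if pL t < pL u ∧ σ (pL u) < σ (pL t) then 1 else 0)
          + (if pL t < pR u ∧ σ (pR u) < σ (pL t) then 1 else 0))
        + ((if pR t < pL u ∧ σ (pL u) < σ (pR t) then 1 else 0)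
          + (if pR t < pR u ∧ σ (pR u) < σ (pR t) then 1 else 0))) := by
    intro t u
    rcases lt_trichotomy t u with htu | rfl | htu
    · rw [if_pos htu, inv2_pair _ _ _ _ (hne t) (hne u)]
      have h1 : (pL t : Fin (2*n)) < pL u := pL_lt_pL_iff.2 htu
      have h2 : (pL t : Fin (2*n)) < pR u := pL_lt_pR_iff.2 (le_of_lt htu)
      have h3 : (pR t : Fin (2*n)) < pL u := pR_lt_pL_iff.2 htu
      have h4 : (pR t : Fin (2*n)) < pR u := pR_lt_pR_iff.2 htu
      by_cases c1 : σ (pL u) < σ (pL t) <;> by_cases c2 : σ (pR u) < σ (pL t) <;>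
        by_cases c3 : σ (pL u) < σ (pR t) <;> by_cases c4 : σ (pR u) < σ (pR t) <;>
        simp [c1, c2, c3, c4, h1, h2, h3, h4]
    · have h1 : ¬ (pL t : Fin (2*n)) < pL t := lt_irrefl _
      have h4 : ¬ (pR t : Fin (2*n)) < pR t := lt_irrefl _
      have h3 : ¬ (pR t : Fin (2*n)) < pL t := fun h => lt_irrefl t (pR_lt_pL_iff.1 h)
      have h2 : ¬ σ (pR t) < σ (pL t) := fun h => lt_irrefl _ (lt_trans (hσ t) h)
      simp [h1, h2, h3, h4, lt_irrefl]
    · have h1 : ¬ (pL t : Fin (2*n)) < pL u := fun h => lt_asymm htu (pL_lt_pL_iff.1 h)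
      have h2 : ¬ (pL t : Fin (2*n)) < pR u := fun h => not_le.2 htu (pL_lt_pR_iff.1 h)
      have h3 : ¬ (pR t : Fin (2*n)) < pL u := fun h => lt_asymm htu (pR_lt_pL_iff.1 h)
      have h4 : ¬ (pR t : Fin (2*n)) < pR u := fun h => lt_asymm htu (pR_lt_pR_iff.1 h)
      simp [h1, h2, h3, h4, lt_asymm htu]
  have rhs : inversions σ = ∑ t : Fin n,
      ((∑ u : Fin n, ((if pL t < pL u ∧ σ (pL u) < σ (pL t) then 1 else 0)
          + (if pL t < pR u ∧ σ (pR u) < σ (pL t) then 1 else 0)))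
       + (∑ u : Fin n, ((if pR t < pL u ∧ σ (pL u) < σ (pR t) then 1 else 0)
          + (if pR t < pR u ∧ σ (pR u) < σ (pR t) then 1 else 0)))) := by
    unfold inversions
    rw [Finset.card_filter, Fintype.sum_prod_type,
      sum_split (fun p1 => ∑ p2 : Fin (2*n), if p1 < p2 ∧ σ p2 < σ p1 then 1 else 0)]
    refine Finset.sum_congr rfl fun t _ => ?_
    rw [sum_split (fun p2 => if pL t < p2 ∧ σ p2 < σ (pL t) then 1 else 0),
      sum_split (fun p2 => if pR t < p2 ∧ σ p2 < σ (pR t) then 1 else 0)]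
  rw [rhs]
  unfold crossinv
  rw [Fintype.sum_prod_type]
  refine Finset.sum_congr rfl fun t _ => ?_
  rw [← Finset.sum_add_distrib]
  exact Finset.sum_congr rfl fun u _ => key t u

/-- the pair expansion of the `n`-th power of a 2-homogeneous element. -/
lemma pow_apply_univ (x : QExt F s (2*n) R) (hx : ∀ S : Finset (Fin (2*n)), S.card ≠ 2 → x S = 0)
    (b : Fin (2*n) → Fin (2*n) → R) (hb : ∀ i j : Fin (2*n), i < j → x {i, j} = b i j) :
    (x ^ n) Finset.univ = pfSumInv s b := by
  have hxl : (x ^ n) = (List.ofFn fun _ : Fin n => x).prod := by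
    rw [List.ofFn_const, List.prod_replicate]
  rw [hxl, master 2 n (fun _ => x) (fun t S h => hx S h) Finset.univ, ← Finset.sum_filter,
    pfSumInv, ← Finset.sum_filter]
  refine (Finset.sum_bij
    (fun (σ : Equiv.Perm (Fin (2*n))) _ =>
      fun t : Fin n => ({σ (pL t), σ (pR t)} : Finset (Fin (2*n))))
    ?_ ?_ ?_ ?_).symm
  · intro σ hσ
    rw [Finset.mem_filter] at hσ ⊢
    refine ⟨Finset.mem_univ _, ?_, ?_, ?_⟩
    · intro t
      exact Finset.card_pair (fun h => pL_ne_pR t t (σ.injective h))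
    · intro t u htu
      rw [Finset.disjoint_left]
      intro v hv hv'
      simp only [Finset.mem_insert, Finset.mem_singleton] at hv hv'
      have hval : t.1 < u.1 := htu
      rcases hv with rfl | rfl <;> rcases hv' with h | h <;>
        · have := σ.injective h
          rw [Fin.ext_iff] at this
          simp only [pL, pR] at this
          omega
    · ext v
      simp only [Finset.mem_biUnion, Finset.mem_univ, true_and, iff_true,
        Finset.mem_insert, Finset.mem_singleton]
      obtain ⟨t, ht | ht⟩ := exists_pLR (σ.symm v)
      · exact ⟨t, Or.inl (by rw [← ht, σ.apply_symm_apply])⟩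
      · exact ⟨t, Or.inr (by rw [← ht, σ.apply_symm_apply])⟩
  · intro σ1 hσ1 σ2 hσ2 h
    rw [Finset.mem_filter] at hσ1 hσ2
    have hpt : ∀ t : Fin n, σ1 (pL t) = σ2 (pL t) ∧ σ1 (pR t) = σ2 (pR t) := by
      intro t
      exact pair_eq_of_lt (hσ1.2 t) (hσ2.2 t) (congrFun h t)
    refine Equiv.ext fun p => ?_
    obtain ⟨t, rfl | rfl⟩ := exists_pLR p
    · exact (hpt t).1
    · exact (hpt t).2
  · intro A hA
    rw [Finset.mem_filter] at hA
    obtain ⟨-, h1, h2, h3⟩ := hA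
    choose c d hcd hA using fun t => Finset.card_eq_two.1 (h1 t)
    set vmin : Fin n → Fin (2*n) := fun t => if c t < d t then c t else d t with hvmin
    set vmax : Fin n → Fin (2*n) := fun t => if c t < d t then d t else c t with hvmax
    have hmm : ∀ t, vmin t < vmax t ∧ A t = {vmin t, vmax t} := by
      intro t
      rcases lt_or_gt_of_ne (hcd t) with h | h
      · rw [hvmin, hvmax]
        simp only [if_pos h]
        exact ⟨h, hA t⟩
      · rw [hvmin, hvmax]
        simp only [if_neg (lt_asymm h)]
        exact ⟨h, by rw [hA t, Finset.pair_comm]⟩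
    set f : Fin (2*n) → Fin (2*n) :=
      fun p => if p.1 % 2 = 0 then vmin ⟨p.1/2, by have := p.2; omega⟩
        else vmax ⟨p.1/2, by have := p.2; omega⟩ with hf
    have hfL : ∀ t : Fin n, f (pL t) = vmin t := by
      intro t
      rw [hf]
      simp only [pL]
      simp only [show 2 * t.1 % 2 = 0 by omega, if_true, ↓reduceIte]
      congr 1
      apply Fin.ext
      simp only []
      omega
    have hfR : ∀ t : Fin n, f (pR t) = vmax t := by
      intro t
      rw [hf]
      simp only [pR]
      simp only [show (2 * t.1 + 1) % 2 ≠ 0 by omega, if_false, ↓reduceIte]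
      congr 1
      apply Fin.ext
      simp only []
      omega
    have hmem : ∀ p : Fin (2*n), f p ∈ A ⟨p.1/2, by have := p.2; omega⟩ := by
      intro p
      rw [hf]
      by_cases hp : p.1 % 2 = 0 <;> simp only [hp, if_true, if_false, if_pos, if_neg] <;>
        rw [(hmm _).2] <;> simp [hp]
    have hinj : Function.Injective f := by
      intro p p' hpp
      have hm1 := hmem p
      have hm2 := hmem p'
      rw [hpp] at hm1
      have hteq : (⟨p.1/2, by have := p.2; omega⟩ : Fin n) = ⟨p'.1/2, by have := p'.2; omega⟩ := by
        by_contra hne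
        have hd : Disjoint (A ⟨p.1/2, by have := p.2; omega⟩) (A ⟨p'.1/2, by have := p'.2; omega⟩) := by
          rcases lt_or_gt_of_ne hne with h | h
          · exact h2 _ _ h
          · exact (h2 _ _ h).symm
        exact Finset.disjoint_left.1 hd hm1 hm2
      have hdiv : p.1 / 2 = p'.1 / 2 := by
        have := congrArg Fin.val hteq
        simpa using this
      by_cases hp : p.1 % 2 = 0 <;> by_cases hp' : p'.1 % 2 = 0
      · apply Fin.ext; omega
      · exfalso
        rw [hf] at hpp
        simp only [if_pos hp, if_neg hp'] at hpp
        rw [show (⟨p.1/2, by have := p.2; omega⟩ : Fin n) = ⟨p'.1/2, by have := p'.2; omega⟩ from hteq] at hpp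
        exact absurd hpp (ne_of_lt (hmm _).1)
      · exfalso
        rw [hf] at hpp
        simp only [if_neg hp, if_pos hp'] at hpp
        rw [show (⟨p.1/2, by have := p.2; omega⟩ : Fin n) = ⟨p'.1/2, by have := p'.2; omega⟩ from hteq] at hpp
        exact absurd hpp.symm (ne_of_lt (hmm _).1)
      · apply Fin.ext; omega
    set σ : Equiv.Perm (Fin (2*n)) := Equiv.ofBijective f (Finite.injective_iff_bijective.1 hinj) with hσdef
    have hσapp : ∀ p, σ p = f p := fun p => rfl
    refine ⟨σ, ?_, ?_⟩
    · rw [Finset.mem_filter]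
      refine ⟨Finset.mem_univ _, fun t => ?_⟩
      rw [hσapp, hσapp, hfL, hfR]
      exact (hmm t).1
    · funext t
      show ({σ (pL t), σ (pR t)} : Finset (Fin (2*n))) = A t
      rw [hσapp, hσapp, hfL, hfR]
      exact ((hmm t).2).symm
  · intro σ hσ
    rw [Finset.mem_filter] at hσ
    rw [crossinv_pairs hσ.2, zpow_neg_inv]
    congr 1
    rw [pairProd]
    refine congrArg List.prod (congrArg List.ofFn ?_)
    funext t
    rw [hb _ _ (hσ.2 t)]
end PfSide2

section Theta
variable {s r : F} {n : ℕ} {R : Type*} [Ring R] [Algebra F R]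

/-- `θ_m = ω_{2m-1} ω_{2m}`. -/
def th (s : F) (a : Fin (2*n) → Fin (2*n) → R) (m : Fin n) : QExt F s (2*n) R :=
  oml s a (pL m) * oml s a (pR m)

lemma sum_apply {ι : Type*} {N : ℕ} (T : Finset ι) (g : ι → QExt F s N R)
    (S : Finset (Fin N)) : (∑ i ∈ T, g i) S = ∑ i ∈ T, g i S := by
  induction T using Finset.cons_induction with
  | empty => rfl
  | cons i T hi ih => rw [Finset.sum_cons, Finset.sum_cons, add_apply, ih]

variable {a : Fin (2*n) → Fin (2*n) → R}

lemma th_comm (hs : s ≠ 0) (ha : IsQSemigroup r s a) {m m' : Fin n} (h : m < m') :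
    th s a m' * th s a m = (s⁻¹^4) • (th s a m * th s a m') := by
  have hAB : (pL m : Fin (2*n)) < pR m := pL_lt_pR_self m
  have hBC : (pR m : Fin (2*n)) < pL m' := pR_lt_pL_iff.2 h
  have hCD : (pL m' : Fin (2*n)) < pR m' := pL_lt_pR_self m'
  have hAC := lt_trans hAB hBC
  have hAD := lt_trans hAC hCD
  have hBD := lt_trans hBC hCD
  calc th s a m' * th s a m
      = oml s a (pL m') * oml s a (pR m') * (oml s a (pL m) * oml s a (pR m)) := rfl
    _ = (-s⁻¹) • (oml s a (pL m') * oml s a (pL m) * (oml s a (pR m') * oml s a (pR m))) :=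
        swap3 (omega_rel_gt hs ha hAD) _ _
    _ = ((-s⁻¹)*(-s⁻¹)) •
        ((oml s a (pL m) * oml s a (pL m')) * (oml s a (pR m') * oml s a (pR m))) := by
        rw [omega_rel_gt hs ha hAC, smul_mul_assoc, smul_smul]
    _ = ((-s⁻¹)*(-s⁻¹)*(-s⁻¹)) •
        ((oml s a (pL m) * oml s a (pL m')) * (oml s a (pR m) * oml s a (pR m'))) := by
        rw [omega_rel_gt hs ha hBD, mul_smul_comm, smul_smul]
    _ = ((-s⁻¹)*(-s⁻¹)*(-s⁻¹)*(-s⁻¹)) •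
        ((oml s a (pL m) * oml s a (pR m)) * (oml s a (pL m') * oml s a (pR m'))) := by
        rw [swap3 (omega_rel_gt hs ha hBC) (oml s a (pL m)) (oml s a (pR m')), smul_smul]
    _ = (s⁻¹^4) • (th s a m * th s a m') := by
        rw [show (-s⁻¹)*(-s⁻¹)*(-s⁻¹)*(-s⁻¹) = s⁻¹^4 by ring]
        rfl

lemma th_sq (hs : s ≠ 0) (ha : IsQSemigroup r s a) (m : Fin n) :
    th s a m * th s a m = 0 := by
  calc th s a m * th s a m
      = oml s a (pL m) * oml s a (pR m) * (oml s a (pL m) * oml s a (pR m)) := rfl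
    _ = (-s⁻¹) • (oml s a (pL m) * oml s a (pL m) * (oml s a (pR m) * oml s a (pR m))) :=
        swap3 (omega_rel_gt hs ha (pL_lt_pR_self m)) _ _
    _ = 0 := by rw [omega_sq hs ha, zero_mul, smul_zero]

/-- pairing up a product of `2n` factors. -/
lemma pair_prod_eq {M : Type*} [Monoid M] : ∀ {k : ℕ} (ω : Fin (2*k) → M),
    ((List.finRange k).map fun m => ω (pL m) * ω (pR m)).prod = (List.ofFn ω).prod := by
  intro k
  induction k with
  | zero =>
    intro ω
    rfl
  | succ k ih =>
    intro ω
    rw [List.finRange_succ, List.map_cons, List.prod_cons, List.map_map]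
    set ω' : Fin (2*k) → M := fun p => ω p.succ.succ with hω'
    have h1 : ∀ m : Fin k, ω (pL m.succ) = ω' (pL m) := by
      intro m
      rw [hω']
      refine congrArg ω (Fin.ext ?_)
      show 2 * (m.1 + 1) = 2 * m.1 + 1 + 1
      omega
    have h2 : ∀ m : Fin k, ω (pR m.succ) = ω' (pR m) := by
      intro m
      rw [hω']
      refine congrArg ω (Fin.ext ?_)
      show 2 * (m.1 + 1) + 1 = 2 * m.1 + 1 + 1 + 1
      omega
    rw [show ((fun m : Fin (k+1) => ω (pL m) * ω (pR m)) ∘ Fin.succ)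
        = fun m : Fin k => ω' (pL m) * ω' (pR m) from
      funext fun m => by rw [Function.comp_apply, h1, h2]]
    rw [ih ω']
    have e1 : List.ofFn ω = ω 0 :: List.ofFn (fun i : Fin (2*k+1) => ω i.succ) :=
      List.ofFn_succ
    have e2 : List.ofFn (fun i : Fin (2*k+1) => ω i.succ)
        = ω (0 : Fin (2*k+1)).succ :: List.ofFn ω' :=
      List.ofFn_succ
    rw [e1, e2, List.prod_cons, List.prod_cons, ← mul_assoc]
    have hp0 : (pL (0 : Fin (k+1)) : Fin (2*(k+1))) = 0 := Fin.ext (by simp [pL])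
    have hp1 : (pR (0 : Fin (k+1)) : Fin (2*(k+1))) = (0 : Fin (2*k+1)).succ :=
      Fin.ext (by simp [pR])
    rw [hp0, hp1]
end Theta

end QExt
end QE

/-- In `𝒜_{r,s}(2n)` with `[n]_{s⁻⁴}! ≠ 0`: for `B′ = A 𝕁_r A^T`, i.e.
`b′_{ij} = Σ_m (a_{i,2m-1} a_{j,2m} - r a_{i,2m} a_{j,2m-1})`, one has
`Pf_{s⁻¹}(B′) = cdet_{s⁻¹}(A)`. -/
theorem pfInv_eq_cdet {F : Type*} [Field F] (r s : F) (hr : r ≠ 0) (hs : s ≠ 0)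
    {R : Type*} [Ring R] [Algebra F R] {n : ℕ} (a : Fin (2 * n) → Fin (2 * n) → R)
    (ha : IsQSemigroup r s a) (hfac : qfac (s⁻¹ ^ 4) n ≠ 0) :
    PfInv s (fun i j => ∑ m : Fin n,
        (a i (pL m) * a j (pR m) - r • (a i (pR m) * a j (pL m))))
      = cdet s a := by
  classical
  obtain ⟨ha1, ha2, ha3, ha4⟩ := id ha
  set b : Fin (2*n) → Fin (2*n) → R := fun i j => ∑ m : Fin n,
      (a i (pL m) * a j (pR m) - r • (a i (pR m) * a j (pL m))) with hbdef
  set Ω : QExt F s (2*n) R := ∑ m : Fin n, QExt.th s a m with hΩ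
  have hΩcard : ∀ S : Finset (Fin (2*n)), S.card ≠ 2 → Ω S = 0 := by
    intro S hS
    rw [hΩ, QExt.sum_apply]
    exact Finset.sum_eq_zero fun m _ => QExt.oml_mul_oml_zero a _ _ hS
  have hΩpair : ∀ i j : Fin (2*n), i < j → Ω {i, j} = b i j := by
    intro i j hij
    rw [hΩ, QExt.sum_apply, hbdef]
    refine Finset.sum_congr rfl fun m _ => ?_
    have h3 := ha3 i j (pL m) (pR m) hij (QExt.pL_lt_pR_self m)
    calc QExt.th s a m {i, j}
        = a i (pL m) * a j (pR m) + (-s⁻¹) • (a j (pL m) * a i (pR m)) :=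
          QExt.oml_mul_oml_pair a (pL m) (pR m) hij
      _ = a i (pL m) * a j (pR m) - r • (a i (pR m) * a j (pL m)) := by
          rw [neg_smul, ← h3, ← sub_eq_add_neg]
  have hcomm : ∀ {m m' : Fin n}, m < m' → QExt.th s a m' * QExt.th s a m
      = (s⁻¹^4) • (QExt.th s a m * QExt.th s a m') := fun h => QExt.th_comm hs ha h
  have hsqθ : ∀ m : Fin n, QExt.th s a m * QExt.th s a m = 0 := QExt.th_sq hs ha
  have hpow := QExt.omega_pow (θ := QExt.th s a) (q := s⁻¹^4) hcomm hsqθ n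
  have hpc : (Finset.univ : Finset (Fin n)).powersetCard n = {Finset.univ} := by
    have h := Finset.powersetCard_self (Finset.univ : Finset (Fin n))
    rwa [Finset.card_univ, Fintype.card_fin] at h
  rw [hpc, Finset.sum_singleton, ← hΩ] at hpow
  have hθu : QExt.thetaProd (QExt.th s a) Finset.univ
      = (List.ofFn fun p : Fin (2*n) => QExt.oml s a p).prod := by
    rw [QExt.thetaProd, Fin.sort_univ]
    exact QExt.pair_prod_eq (fun p => QExt.oml s a p)
  have hpf : (Ω ^ n) Finset.univ = pfSumInv s b :=
    QExt.pow_apply_univ Ω hΩcard b hΩpair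
  have hcdet : (Ω ^ n) Finset.univ = qfac (s⁻¹^4) n • cdet s a := by
    rw [hpow, QExt.smul_apply, hθu, QExt.prod_oml_univ]
  rw [PfInv, ← hpf, hcdet, smul_smul, inv_mul_cancel₀ hfac, one_smul]
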